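/- For the symmetric BAR kernel 𝒬(x,·) = 𝒩(ax, σ²) with a ∈ (−1,1), σ > 0, invariant measure μ = 𝒩(0, σ_a²) with σ_a² = σ²/(1−a²), and density q(x,y) = (1−a²)^{-1/2} exp(−(a²y² + a²x² − 2axy)/(2σ²)) of 𝒬(x,·) with respect to μ, the function 𝔥(x) = (∫_ℝ q(x,y)² μ(dy))^{1/2} equals 𝔥(x) = (1−a⁴)^{-1/4} exp( (a²(1−a²)/(1+a²)) · x²/(2σ²) ) for all x ∈ ℝ, and 𝔥 ∈ L²(μ), i.e. ∫_{ℝ²} q(x,y)² μ(dx)μ(dy) < ∞. -/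

import Mathlib

open MeasureTheory ProbabilityTheory Real
open scoped NNReal ENNReal

lemma bar_exp_quad_eq {b : ℝ} (hb : 0 < b) (c x : ℝ) :
    Real.exp (-b * x ^ 2 + c * x)
      = Real.exp (c ^ 2 / (4 * b)) * Real.exp (-b * (x - c / (2 * b)) ^ 2) := by
  rw [← Real.exp_add]; congr 1; field_simp; ring

lemma bar_integrable_exp_quadratic {b : ℝ} (hb : 0 < b) (c : ℝ) :
    Integrable (fun x : ℝ => Real.exp (-b * x ^ 2 + c * x)) := by
  simp_rw [bar_exp_quad_eq hb c]
  exact ((integrable_exp_neg_mul_sq hb).comp_sub_right (c / (2 * b))).const_mul _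

lemma bar_integral_exp_quadratic {b : ℝ} (hb : 0 < b) (c : ℝ) :
    ∫ x : ℝ, Real.exp (-b * x ^ 2 + c * x)
      = Real.sqrt (π / b) * Real.exp (c ^ 2 / (4 * b)) := by
  simp_rw [bar_exp_quad_eq hb c]
  rw [MeasureTheory.integral_const_mul,
    integral_sub_right_eq_self (μ := volume) (fun x : ℝ => Real.exp (-b * x ^ 2)) (c / (2 * b)),
    integral_gaussian b]
  ring

lemma bar_integral_gaussianReal {m : ℝ} {v : ℝ≥0} (hv : v ≠ 0) (g : ℝ → ℝ) :
    ∫ y, g y ∂(gaussianReal m v) = ∫ y, gaussianPDFReal m v y * g y := by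
  rw [gaussianReal_of_var_ne_zero m hv, gaussianPDF_def]
  rw [show (fun x => ENNReal.ofReal (gaussianPDFReal m v x))
      = (fun x => ((Real.toNNReal (gaussianPDFReal m v x) : ℝ≥0) : ℝ≥0∞)) from rfl]
  rw [integral_withDensity_eq_integral_smul
    ((measurable_gaussianPDFReal m v).real_toNNReal) g]
  congr 1; ext y
  simp [NNReal.smul_def, Real.coe_toNNReal _ (gaussianPDFReal_nonneg m v y)]

lemma bar_integrable_gaussianReal {m : ℝ} {v : ℝ≥0} (hv : v ≠ 0) {g : ℝ → ℝ}
    (h : Integrable (fun y => gaussianPDFReal m v y * g y)) :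
    Integrable g (gaussianReal m v) := by
  rw [gaussianReal_of_var_ne_zero m hv, gaussianPDF_def]
  rw [show (fun x => ENNReal.ofReal (gaussianPDFReal m v x))
      = (fun x => ((Real.toNNReal (gaussianPDFReal m v x) : ℝ≥0) : ℝ≥0∞)) from rfl]
  rw [integrable_withDensity_iff_integrable_smul
    ((measurable_gaussianPDFReal m v).real_toNNReal)]
  have key : (fun y => gaussianPDFReal m v y * g y)
      = fun y => (Real.toNNReal (gaussianPDFReal m v y)) • g y := by
    funext y
    simp [NNReal.smul_def, Real.coe_toNNReal _ (gaussianPDFReal_nonneg m v y)]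
  rw [← key]
  exact h


/-- The density `q(x,y)` of the symmetric BAR kernel `𝒬(x,·) = 𝒩(ax,σ²)` with respect to
its invariant measure `μ = 𝒩(0, σ²/(1-a²))`:
`q(x,y) = (1-a²)^{-1/2} exp(-(a²y² + a²x² - 2axy)/(2σ²))`. -/
noncomputable def barq (a σ : ℝ) (x y : ℝ) : ℝ :=
  (1 / Real.sqrt (1 - a ^ 2))
    * Real.exp (-(a ^ 2 * y ^ 2 + a ^ 2 * x ^ 2 - 2 * a * x * y) / (2 * σ ^ 2))

/-- For the symmetric BAR model, the function `𝔥(x) = (∫ q(x,y)² μ(dy))^{1/2}` equals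
`(1-a⁴)^{-1/4} exp((a²(1-a²)/(1+a²)) x²/(2σ²))`, and `𝔥 ∈ L²(μ)`, i.e.
`∫∫ q(x,y)² μ(dx) μ(dy) < ∞`. -/
theorem barq_h_formula (a σ : ℝ) (ha : a ∈ Set.Ioo (-1 : ℝ) 1) (hσ : 0 < σ) :
    (∀ x : ℝ,
        Real.sqrt (∫ y, (barq a σ x y) ^ 2
            ∂(gaussianReal 0 (Real.toNNReal (σ ^ 2 / (1 - a ^ 2)))))
          = (1 - a ^ 4) ^ (-(1 : ℝ) / 4)
            * Real.exp ((a ^ 2 * (1 - a ^ 2) / (1 + a ^ 2)) * (x ^ 2 / (2 * σ ^ 2))))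
      ∧ ∫⁻ x, (∫⁻ y, ENNReal.ofReal ((barq a σ x y) ^ 2)
            ∂(gaussianReal 0 (Real.toNNReal (σ ^ 2 / (1 - a ^ 2)))))
          ∂(gaussianReal 0 (Real.toNNReal (σ ^ 2 / (1 - a ^ 2)))) < ⊤ := by
  obtain ⟨ha1, ha2⟩ := ha
  have hs : 0 < 1 - a ^ 2 := by nlinarith
  have ht : 0 < 1 + a ^ 2 := by positivity
  have hs4 : 0 < 1 - a ^ 4 := by nlinarith
  have hσ2 : 0 < σ ^ 2 := by positivity
  set v : ℝ≥0 := Real.toNNReal (σ ^ 2 / (1 - a ^ 2)) with hvdef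
  have hvr : (v : ℝ) = σ ^ 2 / (1 - a ^ 2) := Real.coe_toNNReal _ (by positivity)
  have hvpos : (0 : ℝ) < (v : ℝ) := by rw [hvr]; positivity
  have hv : v ≠ 0 := by
    intro h; rw [h] at hvpos; simp at hvpos
  set b : ℝ := (1 + a ^ 2) / (2 * σ ^ 2) with hbdef
  have hb : 0 < b := by positivity
  set K : ℝ := (Real.sqrt (2 * π * (v : ℝ)))⁻¹ * (1 / (1 - a ^ 2)) with hKdef
  have h2πv : (0:ℝ) < 2 * π * (v : ℝ) := by positivity
  have hK : 0 < K := by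
    apply mul_pos (inv_pos.mpr (Real.sqrt_pos.mpr h2πv)) (by positivity)
  -- pointwise identity for the inner integrand
  have hpoint : ∀ x y : ℝ, gaussianPDFReal 0 v y * (barq a σ x y) ^ 2
      = (K * Real.exp (-(a ^ 2 * x ^ 2) / σ ^ 2))
        * Real.exp (-b * y ^ 2 + (2 * a * x / σ ^ 2) * y) := by
    intro x y
    rw [gaussianPDFReal, barq, mul_pow, div_pow, one_pow, Real.sq_sqrt hs.le,
      pow_two (Real.exp (-(a ^ 2 * y ^ 2 + a ^ 2 * x ^ 2 - 2 * a * x * y) / (2 * σ ^ 2))),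
      ← Real.exp_add, hKdef]
    rw [show (Real.sqrt (2 * π * (v:ℝ)))⁻¹ * Real.exp (-(y - 0) ^ 2 / (2 * (v:ℝ)))
          * (1 / (1 - a ^ 2)
            * Real.exp (-(a ^ 2 * y ^ 2 + a ^ 2 * x ^ 2 - 2 * a * x * y) / (2 * σ ^ 2)
              + -(a ^ 2 * y ^ 2 + a ^ 2 * x ^ 2 - 2 * a * x * y) / (2 * σ ^ 2)))
        = ((Real.sqrt (2 * π * (v:ℝ)))⁻¹ * (1 / (1 - a ^ 2)))
          * (Real.exp (-(y - 0) ^ 2 / (2 * (v:ℝ)))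
            * Real.exp (-(a ^ 2 * y ^ 2 + a ^ 2 * x ^ 2 - 2 * a * x * y) / (2 * σ ^ 2)
              + -(a ^ 2 * y ^ 2 + a ^ 2 * x ^ 2 - 2 * a * x * y) / (2 * σ ^ 2)))
        from by ring, ← Real.exp_add]
    rw [show (Real.sqrt (2 * π * (v:ℝ)))⁻¹ * (1 / (1 - a ^ 2))
          * Real.exp (-(a ^ 2 * x ^ 2) / σ ^ 2)
          * Real.exp (-b * y ^ 2 + 2 * a * x / σ ^ 2 * y)
        = ((Real.sqrt (2 * π * (v:ℝ)))⁻¹ * (1 / (1 - a ^ 2)))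
          * (Real.exp (-(a ^ 2 * x ^ 2) / σ ^ 2)
            * Real.exp (-b * y ^ 2 + 2 * a * x / σ ^ 2 * y)) from by ring, ← Real.exp_add]
    congr 1
    rw [hvr, hbdef]
    field_simp
    ring
  have hKS : K * Real.sqrt (π / b) = (1 - a ^ 4) ^ (-(1 : ℝ) / 2) := by
    have hπb : (0:ℝ) ≤ π / b := by positivity
    have hKSpos : 0 < K * Real.sqrt (π / b) := by
      apply mul_pos hK (Real.sqrt_pos.mpr (by positivity))
    have hrpos : (0:ℝ) < (1 - a ^ 4) ^ (-(1 : ℝ) / 2) := Real.rpow_pos_of_pos hs4 _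
    have hsq : (K * Real.sqrt (π / b)) ^ 2 = ((1 - a ^ 4) ^ (-(1 : ℝ) / 2)) ^ 2 := by
      rw [mul_pow, Real.sq_sqrt hπb, hKdef, mul_pow, inv_pow, Real.sq_sqrt h2πv.le]
      rw [← Real.rpow_natCast ((1 - a ^ 4) ^ (-(1 : ℝ) / 2)) 2, ← Real.rpow_mul hs4.le]
      norm_num
      rw [Real.rpow_neg_one, hvr, hbdef]
      have hπ : (π : ℝ) ≠ 0 := Real.pi_ne_zero
      have h14 : (1:ℝ) - a ^ 4 = (1 - a ^ 2) * (1 + a ^ 2) := by ring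
      field_simp
      ring
    calc K * Real.sqrt (π / b) = Real.sqrt ((K * Real.sqrt (π / b)) ^ 2) :=
          (Real.sqrt_sq hKSpos.le).symm
      _ = Real.sqrt (((1 - a ^ 4) ^ (-(1 : ℝ) / 2)) ^ 2) := by rw [hsq]
      _ = (1 - a ^ 4) ^ (-(1 : ℝ) / 2) := Real.sqrt_sq hrpos.le
  -- inner integral value
  have hinner : ∀ x : ℝ, ∫ y, (barq a σ x y) ^ 2 ∂(gaussianReal 0 v)
      = (1 - a ^ 4) ^ (-(1 : ℝ) / 2)
        * Real.exp ((a ^ 2 * (1 - a ^ 2) / (1 + a ^ 2)) * (x ^ 2 / σ ^ 2)) := by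
    intro x
    rw [bar_integral_gaussianReal hv]
    simp_rw [hpoint x]
    rw [MeasureTheory.integral_const_mul, bar_integral_exp_quadratic hb]
    rw [show K * Real.exp (-(a ^ 2 * x ^ 2) / σ ^ 2)
          * (Real.sqrt (π / b) * Real.exp ((2 * a * x / σ ^ 2) ^ 2 / (4 * b)))
        = (K * Real.sqrt (π / b))
          * (Real.exp (-(a ^ 2 * x ^ 2) / σ ^ 2)
            * Real.exp ((2 * a * x / σ ^ 2) ^ 2 / (4 * b))) from by ring,
      ← Real.exp_add, hKS]
    congr 1
    congr 1
    rw [hbdef]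
    field_simp
    ring
  have hint_inner : ∀ x : ℝ,
      Integrable (fun y => (barq a σ x y) ^ 2) (gaussianReal 0 v) := by
    intro x
    apply bar_integrable_gaussianReal hv
    have : (fun y => gaussianPDFReal 0 v y * (barq a σ x y) ^ 2)
        = fun y => (K * Real.exp (-(a ^ 2 * x ^ 2) / σ ^ 2))
          * Real.exp (-b * y ^ 2 + (2 * a * x / σ ^ 2) * y) := funext (hpoint x)
    rw [this]
    exact (bar_integrable_exp_quadratic hb _).const_mul _
  constructor
  · intro x
    rw [hinner x]
    have hexp := Real.exp_pos ((a ^ 2 * (1 - a ^ 2) / (1 + a ^ 2)) * (x ^ 2 / (2 * σ ^ 2)))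
    have hr4 : (0:ℝ) < (1 - a ^ 4) ^ (-(1 : ℝ) / 4) := Real.rpow_pos_of_pos hs4 _
    rw [show (1 - a ^ 4) ^ (-(1 : ℝ) / 2)
          * Real.exp ((a ^ 2 * (1 - a ^ 2) / (1 + a ^ 2)) * (x ^ 2 / σ ^ 2))
        = ((1 - a ^ 4) ^ (-(1 : ℝ) / 4)
          * Real.exp ((a ^ 2 * (1 - a ^ 2) / (1 + a ^ 2)) * (x ^ 2 / (2 * σ ^ 2)))) ^ 2 by
      rw [mul_pow, ← Real.rpow_natCast ((1 - a ^ 4) ^ (-(1 : ℝ) / 4)) 2,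
        ← Real.rpow_mul hs4.le,
        pow_two (Real.exp ((a ^ 2 * (1 - a ^ 2) / (1 + a ^ 2)) * (x ^ 2 / (2 * σ ^ 2)))),
        ← Real.exp_add]
      congr 1
      · norm_num
      · congr 1
        field_simp
        ring]
    exact Real.sqrt_sq (by positivity)
  · -- second part
    set dd : ℝ := a ^ 2 * (1 - a ^ 2) / (1 + a ^ 2) with hdd
    set g : ℝ → ℝ := fun x => (1 - a ^ 4) ^ (-(1 : ℝ) / 2) * Real.exp (dd * (x ^ 2 / σ ^ 2))
      with hgdef
    have hg0 : ∀ x, 0 ≤ g x := fun x =>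
      mul_nonneg (Real.rpow_nonneg hs4.le _) (Real.exp_pos _).le
    have hinner' : ∀ x : ℝ, ∫⁻ y, ENNReal.ofReal ((barq a σ x y) ^ 2) ∂(gaussianReal 0 v)
        = ENNReal.ofReal (g x) := by
      intro x
      rw [← ofReal_integral_eq_lintegral_ofReal (hint_inner x)
        (Filter.Eventually.of_forall fun y => sq_nonneg _), hinner x]
    simp_rw [hinner']
    set b2 : ℝ := (1 - a ^ 2) ^ 2 / (2 * σ ^ 2 * (1 + a ^ 2)) with hb2def
    have hb2 : 0 < b2 := by positivity
    have hgint : Integrable g (gaussianReal 0 v) := by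
      apply bar_integrable_gaussianReal hv
      have hpt2 : ∀ x : ℝ, gaussianPDFReal 0 v x * g x
          = ((Real.sqrt (2 * π * (v:ℝ)))⁻¹ * (1 - a ^ 4) ^ (-(1 : ℝ) / 2))
            * Real.exp (-b2 * x ^ 2 + 0 * x) := by
        intro x
        rw [gaussianPDFReal, hgdef]
        rw [show (Real.sqrt (2 * π * (v:ℝ)))⁻¹ * Real.exp (-(x - 0) ^ 2 / (2 * (v:ℝ)))
              * ((1 - a ^ 4) ^ (-(1 : ℝ) / 2) * Real.exp (dd * (x ^ 2 / σ ^ 2)))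
            = ((Real.sqrt (2 * π * (v:ℝ)))⁻¹ * (1 - a ^ 4) ^ (-(1 : ℝ) / 2))
              * (Real.exp (-(x - 0) ^ 2 / (2 * (v:ℝ))) * Real.exp (dd * (x ^ 2 / σ ^ 2)))
            from by ring, ← Real.exp_add]
        congr 1
        rw [hvr, hdd, hb2def]
        field_simp
        ring
      rw [funext hpt2]
      exact (bar_integrable_exp_quadratic hb2 0).const_mul _
    rw [← ofReal_integral_eq_lintegral_ofReal hgint
      (Filter.Eventually.of_forall hg0)]
    exact ENNReal.ofReal_lt_top
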